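/- Let n ≥ 2 be an integer and let c_1, …, c_{n+1} be pairwise distinct elements of Ω. If f lies in the image of β*_{n,n-1} : F_2^{[Ω]^{n-1}} → F_2^{[Ω]^n} and f({c_1,…,c_{n+1}}∖{c_i}) = 0 for every i ∈ {1,…,n}, then f({c_1,…,c_n}) = 0. -/

import Mathlib

/-- The set of `m`-element subsets of `Ω`. -/
abbrev NSubsets (Ω : Type*) (m : ℕ) := {s : Finset Ω // s.card = m}

/-- The dual map `β*_{m,j} : F₂^{[Ω]^j} → F₂^{[Ω]^m}`,
`(β*_{m,j} f)(ω) = Σ_{x ∈ [ω]^j} f(x)`. -/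
noncomputable def betaStar (Ω : Type*) (m j : ℕ) :
    (NSubsets Ω j → ZMod 2) →ₗ[ZMod 2] (NSubsets Ω m → ZMod 2) where
  toFun f := fun ω => ∑ x ∈ (Finset.powersetCard j ω.1).attach,
      f ⟨x.1, (Finset.mem_powersetCard.mp x.2).2⟩
  map_add' f g := by
    funext ω
    simp [Finset.sum_add_distrib]
  map_smul' c f := by
    funext ω
    simp [Finset.mul_sum, smul_eq_mul]

/-- The map `β_{m,j} : F₂[Ω]^m → F₂[Ω]^j` on the free modules, sending a basis
element `ω ∈ [Ω]^m` to `Σ_{ω' ∈ [ω]^j} ω'`. -/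
noncomputable def beta (Ω : Type*) (m j : ℕ) :
    (NSubsets Ω m →₀ ZMod 2) →ₗ[ZMod 2] (NSubsets Ω j →₀ ZMod 2) :=
  Finsupp.lsum (ZMod 2) fun ω =>
    ∑ x ∈ (Finset.powersetCard j ω.1).attach,
      Finsupp.lsingle ⟨x.1, (Finset.mem_powersetCard.mp x.2).2⟩

/-- The natural action of a permutation of `Ω` on `m`-element subsets of `Ω`. -/
def permImage {Ω : Type*} [DecidableEq Ω] (σ : Equiv.Perm Ω) {n : ℕ}
    (w : NSubsets Ω n) : NSubsets Ω n :=
  ⟨w.1.image σ, by rw [Finset.card_image_of_injective _ σ.injective, w.2]⟩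

/-- `V_{B,A}`: functions on `[Ω]^{n-1}` vanishing at every `w` with `w ∩ A ≠ B`. -/
def VBA (Ω : Type*) [DecidableEq Ω] (n : ℕ) (A B : Finset Ω) :
    Submodule (ZMod 2) (NSubsets Ω (n - 1) → ZMod 2) where
  carrier := {f | ∀ w : NSubsets Ω (n - 1), w.1 ∩ A ≠ B → f w = 0}
  add_mem' := by
    intro f g hf hg w hw
    simp only [Pi.add_apply, hf w hw, hg w hw, add_zero]
  zero_mem' := fun w _ => rfl
  smul_mem' := by
    intro c f hf w hw
    simp only [Pi.smul_apply, hf w hw, smul_zero]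

/-- `V_A`: the sum of the subspaces `V_{B,A}` over `B ⊆ A` with `|B| < n - 1`. -/
def VA (Ω : Type*) [DecidableEq Ω] (n : ℕ) (A : Finset Ω) :
    Submodule (ZMod 2) (NSubsets Ω (n - 1) → ZMod 2) :=
  ⨆ B ∈ {B : Finset Ω | B ⊆ A ∧ B.card < n - 1}, VBA Ω n A B

/-- `W_A = β*_{n,n-1}(V_A)`. -/
noncomputable def WA (Ω : Type*) [DecidableEq Ω] (n : ℕ) (A : Finset Ω) :
    Submodule (ZMod 2) (NSubsets Ω n → ZMod 2) :=
  (VA Ω n A).map (betaStar Ω n (n - 1))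

/-- Let `n ≥ 2` and let `c₁, …, c_{n+1}` be pairwise distinct elements of `Ω`. If `f`
lies in the image of `β*_{n,n-1}` and `f({c₁,…,c_{n+1}}∖{cᵢ}) = 0` for every
`i ∈ {1,…,n}`, then `f({c₁,…,c_n}) = 0`. -/
theorem vanishing_on_faces
    (Ω : Type) [Countable Ω] [Infinite Ω] [DecidableEq Ω] (n : ℕ) (hn : 2 ≤ n)
    (c : Fin (n + 1) → Ω) (hc : Function.Injective c)
    (f : NSubsets Ω n → ZMod 2)
    (hf : f ∈ LinearMap.range (betaStar Ω n (n - 1)))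
    (h0 : ∀ i : Fin (n + 1), (i : ℕ) < n →
      f ⟨(Finset.univ.image c).erase (c i), by
        rw [Finset.card_erase_of_mem (Finset.mem_image_of_mem c (Finset.mem_univ i)),
          Finset.card_image_of_injective _ hc, Finset.card_univ, Fintype.card_fin]
        omega⟩ = 0) :
    f ⟨Finset.univ.image (fun j : Fin n => c (Fin.castSucc j)), by
      rw [Finset.card_image_of_injective _
          (fun a b hab => Fin.castSucc_injective n (hc hab) :
            Function.Injective fun j : Fin n => c (Fin.castSucc j)),
        Finset.card_univ, Fintype.card_fin]⟩ = 0 := by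
  obtain ⟨g, rfl⟩ := hf
  classical
  set C := Finset.univ.image c with hCdef
  have hCcard : C.card = n + 1 := by
    rw [hCdef, Finset.card_image_of_injective _ hc, Finset.card_univ, Fintype.card_fin]
  set G : Finset Ω → ZMod 2 := fun x => if h : x.card = n - 1 then g ⟨x, h⟩ else 0 with hGdef
  have hβ : ∀ S : NSubsets Ω n, betaStar Ω n (n-1) g S
      = ∑ x ∈ Finset.powersetCard (n-1) S.1, G x := by
    intro S
    rw [← Finset.sum_attach (Finset.powersetCard (n-1) S.1) G]
    simp only [betaStar, LinearMap.coe_mk, AddHom.coe_mk]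
    refine Finset.sum_congr rfl fun x _ => ?_
    rw [hGdef]
    simp only
    rw [dif_pos (Finset.mem_powersetCard.mp x.2).2]
  have hmem : ∀ i : Fin (n+1), c i ∈ C := fun i => Finset.mem_image_of_mem c (Finset.mem_univ i)
  have hcardE : ∀ i : Fin (n+1), (C.erase (c i)).card = n := by
    intro i
    rw [Finset.card_erase_of_mem (hmem i), hCcard]
    omega
  -- key: total sum over all faces is 0
  have herase : ∀ i : Fin (n+1), Finset.powersetCard (n-1) (C.erase (c i)) =
      (Finset.powersetCard (n-1) C).filter (fun x => c i ∉ x) := by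
    intro i
    ext x
    simp only [Finset.mem_powersetCard, Finset.mem_filter, Finset.subset_erase]
    tauto
  have hkey : ∑ i : Fin (n+1), ∑ x ∈ Finset.powersetCard (n-1) (C.erase (c i)), G x = 0 := by
    calc ∑ i : Fin (n+1), ∑ x ∈ Finset.powersetCard (n-1) (C.erase (c i)), G x
        = ∑ i : Fin (n+1), ∑ x ∈ Finset.powersetCard (n-1) C,
            if c i ∉ x then G x else 0 := by
          refine Finset.sum_congr rfl fun i _ => ?_
          rw [herase i, Finset.sum_filter]
      _ = ∑ x ∈ Finset.powersetCard (n-1) C, ∑ i : Fin (n+1),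
            if c i ∉ x then G x else 0 := Finset.sum_comm
      _ = 0 := by
          refine Finset.sum_eq_zero fun x hx => ?_
          obtain ⟨hxC, hxcard⟩ := Finset.mem_powersetCard.mp hx
          rw [Finset.sum_ite, Finset.sum_const, Finset.sum_const_zero, add_zero]
          have himg : x = Finset.image c (Finset.univ.filter fun i => c i ∈ x) := by
            ext a
            simp only [Finset.mem_image, Finset.mem_filter, Finset.mem_univ, true_and]
            constructor
            · intro ha
              obtain ⟨i, _, rfl⟩ := Finset.mem_image.mp (hxC ha)
              exact ⟨i, ha, rfl⟩
            · rintro ⟨i, hi, rfl⟩; exact hi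
          have hk : (Finset.univ.filter fun i : Fin (n+1) => c i ∈ x).card = n - 1 := by
            have h2 := Finset.card_image_of_injective
              (Finset.univ.filter fun i : Fin (n+1) => c i ∈ x) hc
            rw [← himg] at h2
            omega
          have hcards := Finset.card_filter_add_card_filter_not
            (s := (Finset.univ : Finset (Fin (n+1)))) (p := fun i => c i ∈ x)
          have hcard2 : (Finset.univ.filter fun i : Fin (n+1) => ¬ c i ∈ x).card = 2 := by
            rw [Finset.card_univ, Fintype.card_fin, hk] at hcards
            omega
          rw [hcard2, two_nsmul, CharTwo.add_self_eq_zero]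
  -- sum splits
  have hsplit := Fin.sum_univ_castSucc
    (f := fun i : Fin (n+1) => ∑ x ∈ Finset.powersetCard (n-1) (C.erase (c i)), G x)
  have hzero : ∀ j : Fin n,
      ∑ x ∈ Finset.powersetCard (n-1) (C.erase (c (Fin.castSucc j))), G x = 0 := by
    intro j
    have := h0 (Fin.castSucc j) (by simp)
    rw [hβ] at this
    exact this
  have hlast : ∑ x ∈ Finset.powersetCard (n-1) (C.erase (c (Fin.last n))), G x = 0 := by
    rw [hkey, Finset.sum_congr rfl (fun j _ => hzero j), Finset.sum_const_zero, zero_add] at hsplit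
    exact hsplit.symm
  -- the target set is C.erase (c (last n))
  have hset : Finset.univ.image (fun j : Fin n => c (Fin.castSucc j)) = C.erase (c (Fin.last n)) := by
    ext a
    simp only [Finset.mem_image, Finset.mem_univ, true_and, Finset.mem_erase, hCdef]
    constructor
    · rintro ⟨j, rfl⟩
      exact ⟨fun h => (Fin.castSucc_lt_last j).ne (hc h), j.castSucc, rfl⟩
    · rintro ⟨hne, i, rfl⟩
      have hi : i ≠ Fin.last n := fun h => hne (by rw [h])
      obtain ⟨j, rfl⟩ := Fin.exists_castSucc_eq.2 hi
      exact ⟨j, rfl⟩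
  rw [hβ]
  have : (⟨Finset.univ.image (fun j : Fin n => c (Fin.castSucc j)), by
      rw [Finset.card_image_of_injective _
          (fun a b hab => Fin.castSucc_injective n (hc hab) :
            Function.Injective fun j : Fin n => c (Fin.castSucc j)),
        Finset.card_univ, Fintype.card_fin]⟩ : NSubsets Ω n).1 = C.erase (c (Fin.last n)) := hset
  rw [this]
  exact hlast
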